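/- Let γ > 0, ρ > 0, μ > 0, and let C₀, C_{γ,0}, C_{μ,0} > 0 and 0 < T_f < ∞ be given. Then there exists a constant C = C(γ, ρ, μ, C₀, C_{γ,0}, C_{μ,0}, T_f) > 0 with the following property: for every 0 < ε < 1, if φ : [0, T_f] → ℓ² is a solution of the saturable DNLS equation and ψ : [0, T_f] → ℓ² is a solution of the AL lattice whose initial data satisfy ‖φ(0) − ψ(0)‖_{ℓ²} ≤ C₀ ε³, ‖φ(0)‖_{ℓ²} ≤ C_{γ,0} ε, and P_μ(ψ(0)) ≤ C_{μ,0} ε², then ‖φ(t) − ψ(t)‖_{ℓ²} ≤ C ε³ for every t ∈ [0, T_f]. -/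

import Mathlib

open Set

noncomputable section

/-- The Hilbert space ℓ² of square-summable sequences of complex numbers indexed by ℤ. -/
abbrev l2 : Type := lp (fun _ : ℤ => ℂ) 2

/-- `φ : I → ℓ²` is a solution of the saturable DNLS equation
`i φ̇ₙ + (φₙ₊₁ + φₙ₋₁) + γ|φₙ|²φₙ/(1 + ρ|φₙ|²) = 0` on the set `s`, with derivative curve
`φ'`: it is continuously differentiable and satisfies the equation componentwise. -/
def IsSatDNLSSol (γ ρ : ℝ) (s : Set ℝ) (φ φ' : ℝ → l2) : Prop :=
  (∀ t ∈ s, HasDerivWithinAt φ (φ' t) s t) ∧ ContinuousOn φ' s ∧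
    ∀ t ∈ s, ∀ n : ℤ,
      Complex.I * (φ' t) n + ((φ t) (n + 1) + (φ t) (n - 1))
        + (γ * ‖(φ t) n‖ ^ 2 : ℝ) * (φ t) n / (1 + ρ * ‖(φ t) n‖ ^ 2 : ℝ) = 0

/-- `ψ : I → ℓ²` is a solution of the Ablowitz–Ladik lattice
`i ψ̇ₙ + (ψₙ₊₁ + ψₙ₋₁) + μ|ψₙ|²(ψₙ₊₁ + ψₙ₋₁) = 0` on the set `s`, with derivative curve `ψ'`:
it is continuously differentiable and satisfies the equation componentwise. -/
def IsALSol (μ : ℝ) (s : Set ℝ) (ψ ψ' : ℝ → l2) : Prop :=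
  (∀ t ∈ s, HasDerivWithinAt ψ (ψ' t) s t) ∧ ContinuousOn ψ' s ∧
    ∀ t ∈ s, ∀ n : ℤ,
      Complex.I * (ψ' t) n + ((ψ t) (n + 1) + (ψ t) (n - 1))
        + (μ * ‖(ψ t) n‖ ^ 2 : ℝ) * ((ψ t) (n + 1) + (ψ t) (n - 1)) = 0

/-- The deformed power `P_μ(ψ) = Σₙ ln(1 + μ|ψₙ|²)`. -/
def Pdef (μ : ℝ) (ψ : l2) : ℝ := ∑' n : ℤ, Real.log (1 + μ * ‖ψ n‖ ^ 2)

namespace CA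

open Complex

/-! basic toolbox -/

def evalCLM (n : ℤ) : l2 →L[ℂ] ℂ :=
  LinearMap.mkContinuous
    { toFun := fun f => f n
      map_add' := fun f g => by simp [lp.coeFn_add]
      map_smul' := fun c f => by simp [lp.coeFn_smul] }
    1 (fun f => by
      show ‖(f : ℤ → ℂ) n‖ ≤ 1 * ‖f‖
      simpa using lp.norm_apply_le_norm (by norm_num : (2:ENNReal) ≠ 0) f n)

lemma hasDerivWithinAt_apply {s : Set ℝ} {f : ℝ → l2} {D : l2} {t : ℝ}
    (h : HasDerivWithinAt f D s t) (n : ℤ) :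
    HasDerivWithinAt (fun τ => f τ n) (D n) s t := by
  have := ((evalCLM n).restrictScalars ℝ).hasFDerivAt.comp_hasDerivWithinAt t h
  exact this

lemma hasDerivWithinAt_normsq {s : Set ℝ} {f : ℝ → ℂ} {D : ℂ} {t : ℝ}
    (h : HasDerivWithinAt f D s t) :
    HasDerivWithinAt (fun τ => ‖f τ‖ ^ 2) (2 * ((starRingEnd ℂ) (f t) * D).re) s t := by
  have h1 : HasDerivWithinAt (fun τ => (inner ℂ (f τ) (f τ) : ℂ))
      ((inner ℂ (f t) D : ℂ) + (inner ℂ D (f t) : ℂ)) s t := HasDerivWithinAt.inner ℂ h h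
  have h2 := (RCLike.reCLM (K := ℂ)).hasFDerivAt.comp_hasDerivWithinAt t h1
  have h3 : (fun τ => RCLike.reCLM (K := ℂ) ((inner ℂ (f τ) (f τ) : ℂ))) = fun τ => ‖f τ‖ ^ 2 := by
    funext τ
    simpa using inner_self_eq_norm_sq (𝕜 := ℂ) (f τ)
  rw [Function.comp_def, h3] at h2
  refine h2.congr_deriv ?_
  symm
  have : (inner ℂ D (f t) : ℂ) = (starRingEnd ℂ) (inner ℂ (f t) D : ℂ) := (inner_conj_symm _ _).symm
  rw [this]
  simp only [RCLike.reCLM_apply, map_add, RCLike.re_to_complex, Complex.add_re, Complex.conj_re]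
  have : (inner ℂ (f t) D : ℂ) = (starRingEnd ℂ) (f t) * D := by simp [mul_comm]
  rw [this]; ring

lemma hasSum_sq (x : l2) : HasSum (fun n => ‖x n‖ ^ 2) (‖x‖ ^ 2) := by
  have h := (lp.hasSum_inner (𝕜 := ℂ) x x).mapL (RCLike.reCLM (K := ℂ))
  have h1 : (fun n => RCLike.reCLM (K := ℂ) (inner ℂ (x n) (x n) : ℂ)) = fun n => ‖x n‖ ^ 2 := by
    funext n; simpa using inner_self_eq_norm_sq (𝕜 := ℂ) (x n)
  have h2 : RCLike.reCLM (K := ℂ) (inner ℂ x x : ℂ) = ‖x‖ ^ 2 := by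
    simpa using inner_self_eq_norm_sq (𝕜 := ℂ) x
  rwa [h1, h2] at h

lemma summable_sq (x : l2) : Summable (fun n => ‖x n‖ ^ 2) := (hasSum_sq x).summable

lemma apply_le_norm (x : l2) (n : ℤ) : ‖x n‖ ≤ ‖x‖ :=
  lp.norm_apply_le_norm (by norm_num : (2:ENNReal) ≠ 0) x n

lemma summable_mul_shift (x y : l2) (k : ℤ) :
    Summable (fun n => ‖x n‖ * ‖y (n + k)‖) := by
  have h2 : Summable (fun n => ‖y (n + k)‖ ^ 2) :=
    ((Equiv.addRight k).summable_iff (f := fun n => ‖y n‖ ^ 2)).2 (summable_sq y)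
  refine Summable.of_nonneg_of_le (fun n => by positivity)
    (fun n => ?_) (((summable_sq x).add h2).div_const 2)
  nlinarith [norm_nonneg (x n), norm_nonneg (y (n+k)), sq_nonneg (‖x n‖ - ‖y (n + k)‖)]

lemma tsum_mul_shift_le (x : l2) (k : ℤ) :
    (∑' n : ℤ, ‖x n‖ * ‖x (n + k)‖) ≤ ‖x‖ ^ 2 := by
  have h2 : HasSum (fun n => ‖x (n + k)‖ ^ 2) (‖x‖ ^ 2) :=
    ((Equiv.addRight k).hasSum_iff (f := fun n => ‖x n‖ ^ 2)).2 (hasSum_sq x)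
  have hs : HasSum (fun n => (‖x n‖ ^ 2 + ‖x (n + k)‖ ^ 2) / 2) (‖x‖ ^ 2) := by
    have := ((hasSum_sq x).add h2).div_const 2
    rw [show ‖x‖ ^ 2 = (‖x‖ ^ 2 + ‖x‖ ^ 2) / 2 by ring]; exact this
  calc (∑' n : ℤ, ‖x n‖ * ‖x (n + k)‖) ≤ ∑' n : ℤ, (‖x n‖ ^ 2 + ‖x (n + k)‖ ^ 2) / 2 := by
        refine Summable.tsum_le_tsum (fun n => ?_) (summable_mul_shift x x k) hs.summable
        nlinarith [sq_nonneg (‖x n‖ - ‖x (n + k)‖)]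
    _ = ‖x‖ ^ 2 := hs.tsum_eq

lemma coord_decay (x : l2) {δ : ℝ} (hδ : 0 < δ) :
    ∃ N : ℕ, ∀ n : ℤ, (N:ℤ) ≤ |n| → ‖x n‖ ≤ δ := by
  have hs : Summable (fun n : ℤ => ‖x n‖ ^ 2) := (hasSum_sq x).summable
  have ht := hs.tendsto_cofinite_zero
  have hev : ∀ᶠ n in Filter.cofinite, ‖x n‖ ^ 2 < δ ^ 2 := by
    have : Iio (δ ^ 2) ∈ nhds (0:ℝ) := Iio_mem_nhds (by positivity)
    exact ht this
  rw [Filter.eventually_cofinite] at hev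
  obtain ⟨N, hN⟩ := ((hev.image Int.natAbs).bddAbove)
  refine ⟨N + 1, fun n hn => ?_⟩
  by_contra hc
  push_neg at hc
  have hmem : n ∈ {n : ℤ | ¬ ‖x n‖ ^ 2 < δ ^ 2} := by
    simp only [mem_setOf_eq, not_lt]
    nlinarith [norm_nonneg (x n)]
  have h4 : n.natAbs ≤ N := hN (Set.mem_image_of_mem _ hmem)
  rw [Int.abs_eq_natAbs] at hn
  omega

lemma unif_decay {K : Set l2} (hK : IsCompact K) {δ : ℝ} (hδ : 0 < δ) :
    ∃ N : ℕ, ∀ x ∈ K, ∀ n : ℤ, (N:ℤ) ≤ |n| → ‖x n‖ ≤ δ := by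
  obtain ⟨t, htfin, htsub⟩ := Metric.totallyBounded_iff.mp hK.totallyBounded (δ/2) (by positivity)
  have hch : ∀ y : l2, ∃ N : ℕ, ∀ n : ℤ, (N:ℤ) ≤ |n| → ‖y n‖ ≤ δ/2 :=
    fun y => coord_decay y (by positivity)
  choose f hf using hch
  refine ⟨htfin.toFinset.sup f, fun x hx n hn => ?_⟩
  obtain ⟨y, hyt, hxy⟩ := Set.mem_iUnion₂.mp (htsub hx)
  have hfy : ((f y : ℤ)) ≤ |n| := by
    have h5 : f y ≤ htfin.toFinset.sup f := Finset.le_sup (htfin.mem_toFinset.mpr hyt)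
    have := hn
    omega
  have h1 : ‖x n - y n‖ ≤ ‖x - y‖ := by
    have := apply_le_norm (x - y) n
    rwa [lp.coeFn_sub, Pi.sub_apply] at this
  have h2 : ‖x - y‖ < δ/2 := by
    rw [Metric.mem_ball, dist_eq_norm] at hxy
    exact hxy
  have h3 : ‖x n‖ ≤ ‖x n - y n‖ + ‖y n‖ := by
    have := norm_add_le (x n - y n) (y n)
    simpa using this
  calc ‖x n‖ ≤ ‖x n - y n‖ + ‖y n‖ := h3
    _ ≤ δ/2 + δ/2 := add_le_add (h1.trans h2.le) (hf y n hfy)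
    _ = δ := by ring

/-! telescoping engine -/

lemma sum_telescope_Icc (f : ℤ → ℝ) (a : ℤ) : ∀ b : ℤ, a ≤ b →
    ∑ n ∈ Finset.Icc a b, (f n - f (n-1)) = f b - f (a-1) := by
  refine Int.le_induction ?_ ?_
  · have : Finset.Icc a a = {a} := Finset.Icc_self a
    simp [this]
  · intro b hab ih
    have hins : Finset.Icc a (b+1) = insert (b+1) (Finset.Icc a b) := by
      ext m; simp only [Finset.mem_Icc, Finset.mem_insert]; omega
    have hnot : (b+1) ∉ Finset.Icc a b := by simp [Finset.mem_Icc]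
    rw [hins, Finset.sum_insert hnot, ih]
    have : (b + 1 - 1 : ℤ) = b := by ring
    rw [this]; ring

lemma tele_const {Tf : ℝ} (hTf : 0 < Tf) (g h : ℤ → ℝ → ℝ) (G : ℝ → ℝ)
    (hd : ∀ n : ℤ, ∀ t ∈ Icc (0:ℝ) Tf, HasDerivWithinAt (g n) (h n t - h (n-1) t) (Icc 0 Tf) t)
    (hdecay : ∀ δ : ℝ, 0 < δ → ∃ N₀ : ℕ, ∀ n : ℤ, (N₀ : ℤ) ≤ |n| → ∀ t ∈ Icc (0:ℝ) Tf, |h n t| ≤ δ)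
    (hsum : ∀ t ∈ Icc (0:ℝ) Tf, HasSum (fun n => g n t) (G t)) :
    ∀ t ∈ Icc (0:ℝ) Tf, G t = G 0 := by
  intro t ht
  have h0 : (0:ℝ) ∈ Icc (0:ℝ) Tf := ⟨le_refl _, hTf.le⟩
  set S : ℕ → ℝ → ℝ := fun N τ => ∑ n ∈ Finset.Icc (-(N:ℤ)) N, g n τ with hS
  have hSd : ∀ N : ℕ, ∀ τ ∈ Icc (0:ℝ) Tf,
      HasDerivWithinAt (S N) (h N τ - h (-(N:ℤ)-1) τ) (Icc 0 Tf) τ := by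
    intro N τ hτ
    have := HasDerivWithinAt.fun_sum (u := Finset.Icc (-(N:ℤ)) N)
      (fun n _ => hd n τ hτ)
    have heq : ∑ n ∈ Finset.Icc (-(N:ℤ)) N, (h n τ - h (n-1) τ) = h N τ - h (-(N:ℤ)-1) τ := by
      have := sum_telescope_Icc (fun n => h n τ) (-(N:ℤ)) N (by omega)
      simpa using this
    rw [heq] at this
    exact this
  have key : ∀ δ : ℝ, 0 < δ → |G t - G 0| ≤ 2 * δ * Tf := by
    intro δ hδ
    obtain ⟨N₀, hN₀⟩ := hdecay δ hδ
    have hb : ∀ N : ℕ, N₀ ≤ N → |S N t - S N 0| ≤ 2 * δ * Tf := by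
      intro N hN
      have hmvt := Convex.norm_image_sub_le_of_norm_hasDerivWithin_le
        (f := S N) (f' := fun τ => h N τ - h (-(N:ℤ)-1) τ) (C := 2*δ)
        (fun τ hτ => hSd N τ hτ)
        (fun τ hτ => by
          have h1 := hN₀ N (by simp; omega) τ hτ
          have h2 := hN₀ (-(N:ℤ)-1) (by rw [_root_.abs_of_nonpos (by omega)]; omega) τ hτ
          rw [Real.norm_eq_abs]
          calc |h N τ - h (-(N:ℤ)-1) τ| ≤ |h N τ| + |h (-(N:ℤ)-1) τ| := _root_.abs_sub _ _
            _ ≤ 2 * δ := by linarith)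
        (convex_Icc 0 Tf) h0 ht
      rw [Real.norm_eq_abs, Real.norm_eq_abs] at hmvt
      calc |S N t - S N 0| ≤ 2*δ * |t - 0| := hmvt
        _ ≤ 2*δ*Tf := by
          have : |t - 0| ≤ Tf := by rw [sub_zero, _root_.abs_of_nonneg ht.1]; exact ht.2
          nlinarith
    have hfin : Filter.Tendsto (fun N : ℕ => Finset.Icc (-(N:ℤ)) N) Filter.atTop Filter.atTop := by
      apply Filter.tendsto_atTop_finset_of_monotone
      · intro M N hMN
        apply Finset.Icc_subset_Icc <;> omega
      · intro z
        exact ⟨z.natAbs, by rw [Finset.mem_Icc]; omega⟩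
    have hlt : Filter.Tendsto (fun N => S N t) Filter.atTop (nhds (G t)) :=
      (hsum t ht).comp hfin
    have hl0 : Filter.Tendsto (fun N => S N 0) Filter.atTop (nhds (G 0)) :=
      (hsum 0 h0).comp hfin
    have habs : Filter.Tendsto (fun N => |S N t - S N 0|) Filter.atTop (nhds (|G t - G 0|)) :=
      (hlt.sub hl0).abs
    exact le_of_tendsto habs (Filter.eventually_atTop.mpr ⟨N₀, hb⟩)
  by_contra hne
  have hpos : 0 < |G t - G 0| := abs_pos.mpr (sub_ne_zero.mpr hne)
  have hk := key (|G t - G 0| / (4 * Tf)) (by positivity)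
  have h4 : 2 * (|G t - G 0| / (4 * Tf)) * Tf = |G t - G 0| / 2 := by field_simp; ring
  rw [h4] at hk
  linarith

/-! complex algebra -/

lemma key_re (z p m : ℂ) (r : ℝ) :
    ((starRingEnd ℂ) z * (Complex.I * (p + m + (r:ℂ) * z))).re
      = (Complex.I * (starRingEnd ℂ) z * p).re - (Complex.I * (starRingEnd ℂ) m * z).re := by
  simp only [Complex.mul_re, Complex.mul_im, Complex.add_re, Complex.add_im, Complex.conj_re,
    Complex.conj_im, Complex.I_re, Complex.I_im, Complex.ofReal_re, Complex.ofReal_im]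
  ring

lemma key_re_AL (z p m : ℂ) (r : ℝ) :
    ((starRingEnd ℂ) z * (Complex.I * (p + m + (r:ℂ) * (p + m)))).re
      = (1+r) * ((Complex.I * (starRingEnd ℂ) z * p).re
          - (Complex.I * (starRingEnd ℂ) m * z).re) := by
  simp only [Complex.mul_re, Complex.mul_im, Complex.add_re, Complex.add_im, Complex.conj_re,
    Complex.conj_im, Complex.I_re, Complex.I_im, Complex.ofReal_re, Complex.ofReal_im]
  ring

lemma sat_solve {γ ρ : ℝ} (hρ : 0 ≤ ρ) {D z p m : ℂ}
    (h : Complex.I * D + (p + m) + (γ * ‖z‖ ^ 2 : ℝ) * z / (1 + ρ * ‖z‖ ^ 2 : ℝ) = 0) :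
    D = Complex.I * (p + m + ((γ * ‖z‖ ^ 2 / (1 + ρ * ‖z‖ ^ 2) : ℝ) : ℂ) * z) := by
  have hden : (1 + ρ * ‖z‖ ^ 2 : ℝ) ≠ 0 := by positivity
  have hden' : ((1 + ρ * ‖z‖ ^ 2 : ℝ) : ℂ) ≠ 0 := by exact_mod_cast Complex.ofReal_ne_zero.mpr hden
  have hcast : ((γ * ‖z‖ ^ 2 / (1 + ρ * ‖z‖ ^ 2) : ℝ) : ℂ)
      = ((γ * ‖z‖ ^ 2 : ℝ) : ℂ) / ((1 + ρ * ‖z‖ ^ 2 : ℝ) : ℂ) := by push_cast; ring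
  rw [hcast]
  field_simp at h ⊢
  linear_combination (-Complex.I) * h + D * Complex.I_sq

lemma al_solve {μ : ℝ} {D z p m : ℂ}
    (h : Complex.I * D + (p + m) + (μ * ‖z‖ ^ 2 : ℝ) * (p + m) = 0) :
    D = Complex.I * (p + m + ((μ * ‖z‖ ^ 2 : ℝ) : ℂ) * (p + m)) := by
  linear_combination (-Complex.I) * h + D * Complex.I_sq

/-! conservation laws -/

lemma bounded_image {Tf : ℝ} {u : ℝ → l2} (hc : ContinuousOn u (Icc 0 Tf)) :
    ∃ M : ℝ, 0 ≤ M ∧ ∀ τ ∈ Icc (0:ℝ) Tf, ‖u τ‖ ≤ M := by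
  have hK : IsCompact (u '' Icc 0 Tf) := (isCompact_Icc).image_of_continuousOn hc
  obtain ⟨M, hM⟩ := hK.isBounded.exists_norm_le
  exact ⟨max M 0, le_max_right _ _, fun τ hτ =>
    (hM _ (Set.mem_image_of_mem _ hτ)).trans (le_max_left _ _)⟩

lemma abs_Ire_le (z p : ℂ) : |(Complex.I * (starRingEnd ℂ) z * p).re| ≤ ‖z‖ * ‖p‖ := by
  have h1 : |(Complex.I * (starRingEnd ℂ) z * p).re| ≤ ‖Complex.I * (starRingEnd ℂ) z * p‖ :=
    Complex.abs_re_le_norm _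
  calc |(Complex.I * (starRingEnd ℂ) z * p).re| ≤ ‖Complex.I * (starRingEnd ℂ) z * p‖ := h1
    _ = ‖z‖ * ‖p‖ := by
        rw [norm_mul, norm_mul, Complex.norm_I, RCLike.norm_conj, one_mul]

lemma norm_conserved {γ ρ Tf : ℝ} (hρ : 0 ≤ ρ) (hTf : 0 < Tf) {φ φ' : ℝ → l2}
    (hφ : IsSatDNLSSol γ ρ (Icc 0 Tf) φ φ') :
    ∀ t ∈ Icc (0:ℝ) Tf, ‖φ t‖ = ‖φ 0‖ := by
  obtain ⟨hd, -, heq⟩ := hφ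
  have hc : ContinuousOn φ (Icc 0 Tf) := fun τ hτ => (hd τ hτ).continuousWithinAt
  obtain ⟨M, hM0, hM⟩ := bounded_image hc
  have hK : IsCompact (φ '' Icc 0 Tf) := (isCompact_Icc).image_of_continuousOn hc
  have main := tele_const hTf (fun n τ => ‖φ τ n‖ ^ 2)
    (fun n t => 2 * (Complex.I * (starRingEnd ℂ) (φ t n) * φ t (n+1)).re)
    (fun τ => ‖φ τ‖ ^ 2) ?_ ?_ (fun t ht => hasSum_sq (φ t))
  · intro t ht
    have h2 := main t ht
    have := congrArg Real.sqrt h2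
    rwa [Real.sqrt_sq (norm_nonneg _), Real.sqrt_sq (norm_nonneg _)] at this
  · -- derivative hypothesis
    intro n t ht
    have hz := hasDerivWithinAt_normsq (hasDerivWithinAt_apply (hd t ht) n)
    have hsolve : φ' t n = Complex.I * (φ t (n+1) + φ t (n-1)
        + ((γ * ‖φ t n‖ ^ 2 / (1 + ρ * ‖φ t n‖ ^ 2) : ℝ) : ℂ) * φ t n) :=
      sat_solve hρ (heq t ht n)
    rw [hsolve] at hz
    convert hz using 1
    rw [key_re]
    have hn : n - 1 + 1 = n := by ring
    simp only []
    rw [hn]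
    ring
  · -- decay hypothesis
    intro δ hδ
    obtain ⟨N, hN⟩ := unif_decay hK (show (0:ℝ) < δ / (2 * (M + 1)) by positivity)
    refine ⟨N, fun n hn t ht => ?_⟩
    have hmem : φ t ∈ φ '' Icc 0 Tf := Set.mem_image_of_mem _ ht
    have h1 : ‖φ t n‖ ≤ δ / (2 * (M + 1)) := hN _ hmem n hn
    have h2 : ‖φ t (n+1)‖ ≤ M + 1 := ((apply_le_norm _ _).trans (hM t ht)).trans (by linarith)
    calc |2 * (Complex.I * (starRingEnd ℂ) (φ t n) * φ t (n+1)).re|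
        = 2 * |(Complex.I * (starRingEnd ℂ) (φ t n) * φ t (n+1)).re| := by
          rw [abs_mul]; norm_num
      _ ≤ 2 * (‖φ t n‖ * ‖φ t (n+1)‖) := by
          have := abs_Ire_le (φ t n) (φ t (n+1))
          linarith
      _ ≤ 2 * (δ / (2 * (M + 1)) * (M + 1)) := by
          have hd2 : (0:ℝ) ≤ δ / (2 * (M + 1)) := by positivity
          gcongr
      _ = δ := by
          have hM1 : (M:ℝ) + 1 ≠ 0 := by positivity
          field_simp

lemma summable_log (μ : ℝ) (hμ : 0 < μ) (x : l2) :
    Summable (fun n => Real.log (1 + μ * ‖x n‖ ^ 2)) := by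
  refine Summable.of_nonneg_of_le
    (fun n => Real.log_nonneg (by nlinarith [norm_nonneg (x n), sq_nonneg ‖x n‖]))
    (fun n => ?_) ((summable_sq x).mul_left μ)
  have h1 : (0:ℝ) < 1 + μ * ‖x n‖ ^ 2 := by positivity
  have := Real.log_le_sub_one_of_pos h1
  linarith

lemma Pdef_conserved {μ Tf : ℝ} (hμ : 0 < μ) (hTf : 0 < Tf) {ψ ψ' : ℝ → l2}
    (hψ : IsALSol μ (Icc 0 Tf) ψ ψ') :
    ∀ t ∈ Icc (0:ℝ) Tf, Pdef μ (ψ t) = Pdef μ (ψ 0) := by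
  obtain ⟨hd, -, heq⟩ := hψ
  have hc : ContinuousOn ψ (Icc 0 Tf) := fun τ hτ => (hd τ hτ).continuousWithinAt
  obtain ⟨M, hM0, hM⟩ := bounded_image hc
  have hK : IsCompact (ψ '' Icc 0 Tf) := (isCompact_Icc).image_of_continuousOn hc
  refine tele_const hTf (fun n τ => Real.log (1 + μ * ‖ψ τ n‖ ^ 2))
    (fun n t => 2 * μ * (Complex.I * (starRingEnd ℂ) (ψ t n) * ψ t (n+1)).re)
    (fun τ => Pdef μ (ψ τ)) ?_ ?_ (fun t ht => (summable_log μ hμ (ψ t)).hasSum)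
  · -- derivative hypothesis
    intro n t ht
    have hz := hasDerivWithinAt_normsq (hasDerivWithinAt_apply (hd t ht) n)
    have h2 := (hz.const_mul μ).const_add 1
    have hpos : (0:ℝ) < 1 + μ * ‖ψ t n‖ ^ 2 := by positivity
    have h3 := (Real.hasDerivAt_log hpos.ne').comp_hasDerivWithinAt t h2
    have hsolve : ψ' t n = Complex.I * (ψ t (n+1) + ψ t (n-1)
        + ((μ * ‖ψ t n‖ ^ 2 : ℝ) : ℂ) * (ψ t (n+1) + ψ t (n-1))) := al_solve (heq t ht n)
    rw [hsolve] at h3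
    rw [Function.comp_def] at h3
    refine h3.congr_deriv ?_
    symm
    rw [key_re_AL]
    have hn : n - 1 + 1 = n := by ring
    simp only []
    rw [hn]
    field_simp
  · -- decay hypothesis
    intro δ hδ
    obtain ⟨N, hN⟩ := unif_decay hK (show (0:ℝ) < δ / (2 * (μ + 1) * (M + 1)) by positivity)
    refine ⟨N, fun n hn t ht => ?_⟩
    have hmem : ψ t ∈ ψ '' Icc 0 Tf := Set.mem_image_of_mem _ ht
    have h1 : ‖ψ t n‖ ≤ δ / (2 * (μ + 1) * (M + 1)) := hN _ hmem n hn
    have h2 : ‖ψ t (n+1)‖ ≤ M + 1 := ((apply_le_norm _ _).trans (hM t ht)).trans (by linarith)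
    have h3 := abs_Ire_le (ψ t n) (ψ t (n+1))
    have hd2 : (0:ℝ) ≤ δ / (2 * (μ + 1) * (M + 1)) := by positivity
    calc |2 * μ * (Complex.I * (starRingEnd ℂ) (ψ t n) * ψ t (n+1)).re|
        = 2 * μ * |(Complex.I * (starRingEnd ℂ) (ψ t n) * ψ t (n+1)).re| := by
          rw [abs_mul, abs_mul]
          rw [abs_of_pos hμ]
          norm_num
      _ ≤ 2 * μ * (‖ψ t n‖ * ‖ψ t (n+1)‖) := by nlinarith
      _ ≤ 2 * (μ+1) * (δ / (2 * (μ + 1) * (M + 1)) * (M + 1)) := by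
          have h6 : ‖ψ t n‖ * ‖ψ t (n+1)‖ ≤ δ / (2 * (μ + 1) * (M + 1)) * (M + 1) := by
            gcongr
          nlinarith [mul_nonneg (norm_nonneg (ψ t n)) (norm_nonneg (ψ t (n+1)))]
      _ = δ := by
          have hM1 : (M:ℝ) + 1 ≠ 0 := by positivity
          have hμ1 : (μ:ℝ) + 1 ≠ 0 := by positivity
          field_simp

/-! Pdef norm bound -/

lemma norm_sq_le_Pdef {μ : ℝ} (hμ : 0 < μ) (x : l2) {P : ℝ} (hP : Pdef μ x ≤ P) :
    ‖x‖ ^ 2 ≤ Real.exp P * P / μ := by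
  have hsum := summable_log μ hμ x
  have hnn : ∀ n : ℤ, 0 ≤ Real.log (1 + μ * ‖x n‖ ^ 2) := fun n =>
    Real.log_nonneg (by nlinarith [sq_nonneg ‖x n‖])
  have hterm : ∀ n : ℤ, μ * ‖x n‖ ^ 2 ≤ Real.exp P * Real.log (1 + μ * ‖x n‖ ^ 2) := by
    intro n
    set a := ‖x n‖ ^ 2 with ha
    have ha0 : 0 ≤ a := sq_nonneg _
    have hpos : (0:ℝ) < 1 + μ * a := by positivity
    have hle1 : Real.log (1 + μ * a) ≤ P :=
      le_trans (Summable.le_tsum hsum n (fun m _ => hnn m)) hP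
    have h2 : 1 + μ * a ≤ Real.exp P := by
      calc 1 + μ * a = Real.exp (Real.log (1 + μ * a)) := (Real.exp_log hpos).symm
        _ ≤ Real.exp P := Real.exp_le_exp.mpr hle1
    have h3 : μ * a / (1 + μ * a) ≤ Real.log (1 + μ * a) := by
      have hinv : (0:ℝ) < (1 + μ * a)⁻¹ := by positivity
      have h3a := Real.log_le_sub_one_of_pos hinv
      rw [Real.log_inv] at h3a
      have h5 : μ * a / (1 + μ * a) = 1 - (1 + μ * a)⁻¹ := by field_simp; ring
      rw [h5]
      linarith
    have h6 : μ * a ≤ (1 + μ * a) * Real.log (1 + μ * a) := by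
      have h6a := (div_le_iff₀ hpos).mp h3
      nlinarith
    calc μ * a ≤ (1 + μ * a) * Real.log (1 + μ * a) := h6
      _ ≤ Real.exp P * Real.log (1 + μ * a) := by nlinarith [hnn n]
  have hμx : HasSum (fun n => μ * ‖x n‖ ^ 2) (μ * ‖x‖ ^ 2) := (hasSum_sq x).mul_left μ
  have hsum2 : Summable (fun n => Real.exp P * Real.log (1 + μ * ‖x n‖ ^ 2)) :=
    hsum.mul_left _
  have h7 : μ * ‖x‖ ^ 2 ≤ Real.exp P * Pdef μ x := by
    have h7a := Summable.tsum_le_tsum hterm hμx.summable hsum2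
    rw [hμx.tsum_eq, tsum_mul_left] at h7a
    exact h7a
  have h8 : Real.exp P * Pdef μ x ≤ Real.exp P * P := by
    have hP0 : 0 ≤ Pdef μ x := tsum_nonneg hnn
    nlinarith [Real.exp_pos P]
  rw [le_div_iff₀ hμ]
  nlinarith

/-! the central inner-product estimate -/

lemma key_re' (z p m w : ℂ) :
    ((starRingEnd ℂ) z * (Complex.I * (p + m + w))).re
      = (Complex.I * (starRingEnd ℂ) z * p).re - (Complex.I * (starRingEnd ℂ) m * z).re
        + ((starRingEnd ℂ) z * (Complex.I * w)).re := by
  simp only [Complex.mul_re, Complex.mul_im, Complex.add_re, Complex.add_im, Complex.conj_re,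
    Complex.conj_im, Complex.I_re, Complex.I_im, Complex.ofReal_re, Complex.ofReal_im]
  ring

set_option maxHeartbeats 1600000 in
lemma inner_diff_bound {γ ρ μ : ℝ} (hγ : 0 < γ) (hρ : 0 ≤ ρ) (hμ : 0 < μ)
    (x y X Y : l2)
    (hx : ∀ n : ℤ, X n = Complex.I * (x (n+1) + x (n-1)
        + ((γ * ‖x n‖ ^ 2 / (1 + ρ * ‖x n‖ ^ 2) : ℝ) : ℂ) * x n))
    (hy : ∀ n : ℤ, Y n = Complex.I * (y (n+1) + y (n-1)
        + ((μ * ‖y n‖ ^ 2 : ℝ) : ℂ) * (y (n+1) + y (n-1)))) :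
    |RCLike.re (inner ℂ (x - y) (X - Y) : ℂ)|
      ≤ ‖x - y‖ * (γ * ‖x‖ ^ 3 + 2 * μ * ‖y‖ ^ 3) := by
  set Δ : l2 := x - y with hΔdef
  set D : l2 := X - Y with hDdef
  have hΔ : ∀ n : ℤ, Δ n = x n - y n := fun n => by
    rw [hΔdef, lp.coeFn_sub]; rfl
  have hD : ∀ n : ℤ, D n = X n - Y n := fun n => by
    rw [hDdef, lp.coeFn_sub]; rfl
  -- the nonlinear residues
  set R : ℤ → ℂ := fun n => ((γ * ‖x n‖ ^ 2 / (1 + ρ * ‖x n‖ ^ 2) : ℝ) : ℂ) * x n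
      - ((μ * ‖y n‖ ^ 2 : ℝ) : ℂ) * (y (n+1) + y (n-1)) with hR
  -- decomposition of D n
  have hDn : ∀ n : ℤ, D n = Complex.I * (Δ (n+1) + Δ (n-1) + R n) := by
    intro n
    rw [hD, hx, hy, hR, hΔ, hΔ]
    ring
  set F : ℤ → ℝ := fun n => ((starRingEnd ℂ) (Δ n) * D n).re with hF
  have hasSumF : HasSum F (RCLike.re (inner ℂ Δ D : ℂ)) := by
    have := (lp.hasSum_inner (𝕜 := ℂ) Δ D).mapL (RCLike.reCLM (K := ℂ))
    exact this.congr_fun (fun n => by simp [hF, mul_comm])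
  set hh : ℤ → ℝ := fun n => (Complex.I * (starRingEnd ℂ) (Δ n) * (Δ (n+1))).re with hhh
  set r : ℤ → ℝ := fun n => ((starRingEnd ℂ) (Δ n) * (Complex.I * R n)).re with hr
  have hq : ∀ n : ℤ, F n = (hh n - hh (n-1)) + r n := by
    intro n
    show ((starRingEnd ℂ) (Δ n) * D n).re
      = ((Complex.I * (starRingEnd ℂ) (Δ n) * (Δ (n+1))).re
        - (Complex.I * (starRingEnd ℂ) (Δ (n-1)) * (Δ ((n-1)+1))).re)
        + ((starRingEnd ℂ) (Δ n) * (Complex.I * R n)).re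
    rw [hDn n]
    rw [key_re' (Δ n) (Δ (n+1)) (Δ (n-1)) (R n)]
    have hn : n - 1 + 1 = n := by ring
    rw [hn]
  -- summability
  have hsum_hh : Summable hh := by
    refine Summable.of_norm_bounded (summable_mul_shift Δ Δ 1) (fun n => ?_)
    rw [Real.norm_eq_abs]
    exact abs_Ire_le (Δ n) (Δ (n+1))
  have hsum_hh' : Summable (fun n => hh (n-1)) :=
    ((Equiv.subRight (1:ℤ)).summable_iff (f := hh)).2 hsum_hh
  have hsum_tele : Summable (fun n => hh n - hh (n-1)) := hsum_hh.sub hsum_hh'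
  have htele0 : (∑' n : ℤ, (hh n - hh (n-1))) = 0 := by
    rw [Summable.tsum_sub hsum_hh hsum_hh']
    have htele := (Equiv.subRight (1:ℤ)).tsum_eq hh
    simp only [Equiv.subRight_apply] at htele
    rw [htele]
    ring
  have hsum_r : Summable r := by
    have : r = fun n => F n - (hh n - hh (n-1)) := by
      funext n; rw [hq n]; ring
    rw [this]
    exact hasSumF.summable.sub hsum_tele
  -- tsum identity
  have hFr : RCLike.re (inner ℂ Δ D : ℂ) = ∑' n : ℤ, r n := by
    have h1 : RCLike.re (inner ℂ Δ D : ℂ) = ∑' n : ℤ, F n := hasSumF.tsum_eq.symm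
    have h2 : (∑' n : ℤ, F n) = (∑' n : ℤ, ((hh n - hh (n-1)) + r n)) := by
      congr 1; funext n; exact hq n
    rw [h1, h2, Summable.tsum_add hsum_tele hsum_r, htele0, zero_add]
  -- pointwise bound on r
  set g : ℤ → ℝ := fun n => ‖Δ‖ * (γ * ‖x‖ * ‖x n‖ ^ 2)
      + ‖Δ‖ * (μ * ‖y‖ * (‖y n‖ * ‖y (n+1)‖)) + ‖Δ‖ * (μ * ‖y‖ * (‖y n‖ * ‖y (n-1)‖)) with hg
  have hrg : ∀ n : ℤ, |r n| ≤ g n := by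
    intro n
    have h1 : |r n| ≤ ‖Δ n‖ * ‖R n‖ := by
      rw [hr]
      simp only []
      calc |((starRingEnd ℂ) (Δ n) * (Complex.I * R n)).re|
          ≤ ‖(starRingEnd ℂ) (Δ n) * (Complex.I * R n)‖ := Complex.abs_re_le_norm _
        _ = ‖Δ n‖ * ‖R n‖ := by
            rw [norm_mul, norm_mul, Complex.norm_I, one_mul, RCLike.norm_conj]
    have hRb : ‖R n‖ ≤ γ * ‖x‖ * ‖x n‖ ^ 2
        + μ * ‖y‖ * (‖y n‖ * ‖y (n+1)‖) + μ * ‖y‖ * (‖y n‖ * ‖y (n-1)‖) := by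
      rw [hR]
      simp only []
      have hden : (1:ℝ) ≤ 1 + ρ * ‖x n‖ ^ 2 := by nlinarith [sq_nonneg ‖x n‖]
      have hc0 : (0:ℝ) ≤ γ * ‖x n‖ ^ 2 / (1 + ρ * ‖x n‖ ^ 2) := by positivity
      have t1 : ‖((γ * ‖x n‖ ^ 2 / (1 + ρ * ‖x n‖ ^ 2) : ℝ) : ℂ) * x n‖
          ≤ γ * ‖x‖ * ‖x n‖ ^ 2 := by
        rw [norm_mul, Complex.norm_real, Real.norm_eq_abs, _root_.abs_of_nonneg hc0]
        have hdiv : γ * ‖x n‖ ^ 2 / (1 + ρ * ‖x n‖ ^ 2) ≤ γ * ‖x n‖ ^ 2 :=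
          div_le_self (by positivity) hden
        have hxn : ‖x n‖ ≤ ‖x‖ := apply_le_norm x n
        nlinarith [norm_nonneg (x n), norm_nonneg x, sq_nonneg ‖x n‖]
      have t2 : ‖((μ * ‖y n‖ ^ 2 : ℝ) : ℂ) * (y (n+1) + y (n-1))‖
          ≤ μ * ‖y‖ * (‖y n‖ * ‖y (n+1)‖) + μ * ‖y‖ * (‖y n‖ * ‖y (n-1)‖) := by
        rw [norm_mul, Complex.norm_real, Real.norm_eq_abs,
          _root_.abs_of_nonneg (by positivity : (0:ℝ) ≤ μ * ‖y n‖ ^ 2)]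
        have hyn : ‖y n‖ ≤ ‖y‖ := apply_le_norm y n
        have htri : ‖y (n+1) + y (n-1)‖ ≤ ‖y (n+1)‖ + ‖y (n-1)‖ := norm_add_le _ _
        calc μ * ‖y n‖ ^ 2 * ‖y (n+1) + y (n-1)‖
            ≤ μ * ‖y n‖ ^ 2 * (‖y (n+1)‖ + ‖y (n-1)‖) :=
              mul_le_mul_of_nonneg_left htri (by positivity)
          _ = μ * (‖y n‖ * (‖y n‖ * ‖y (n+1)‖)) + μ * (‖y n‖ * (‖y n‖ * ‖y (n-1)‖)) := by
              ring
          _ ≤ μ * (‖y‖ * (‖y n‖ * ‖y (n+1)‖)) + μ * (‖y‖ * (‖y n‖ * ‖y (n-1)‖)) := by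
              have m1 : ‖y n‖ * (‖y n‖ * ‖y (n+1)‖) ≤ ‖y‖ * (‖y n‖ * ‖y (n+1)‖) :=
                mul_le_mul_of_nonneg_right hyn (by positivity)
              have m2 : ‖y n‖ * (‖y n‖ * ‖y (n-1)‖) ≤ ‖y‖ * (‖y n‖ * ‖y (n-1)‖) :=
                mul_le_mul_of_nonneg_right hyn (by positivity)
              nlinarith
          _ = μ * ‖y‖ * (‖y n‖ * ‖y (n+1)‖) + μ * ‖y‖ * (‖y n‖ * ‖y (n-1)‖) := by ring
      calc ‖((γ * ‖x n‖ ^ 2 / (1 + ρ * ‖x n‖ ^ 2) : ℝ) : ℂ) * x n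
            - ((μ * ‖y n‖ ^ 2 : ℝ) : ℂ) * (y (n+1) + y (n-1))‖
          ≤ ‖((γ * ‖x n‖ ^ 2 / (1 + ρ * ‖x n‖ ^ 2) : ℝ) : ℂ) * x n‖
            + ‖((μ * ‖y n‖ ^ 2 : ℝ) : ℂ) * (y (n+1) + y (n-1))‖ := norm_sub_le _ _
        _ ≤ _ := by linarith
    have hΔn : ‖Δ n‖ ≤ ‖Δ‖ := apply_le_norm Δ n
    have hRnn : 0 ≤ ‖R n‖ := norm_nonneg _
    have hgn : ‖Δ n‖ * ‖R n‖ ≤ ‖Δ‖ * ‖R n‖ := by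
      nlinarith [norm_nonneg (Δ n)]
    rw [hg]
    simp only []
    calc |r n| ≤ ‖Δ n‖ * ‖R n‖ := h1
      _ ≤ ‖Δ‖ * ‖R n‖ := hgn
      _ ≤ ‖Δ‖ * (γ * ‖x‖ * ‖x n‖ ^ 2
          + μ * ‖y‖ * (‖y n‖ * ‖y (n+1)‖) + μ * ‖y‖ * (‖y n‖ * ‖y (n-1)‖)) := by
          nlinarith [norm_nonneg Δ]
      _ = _ := by ring
  -- summability of g and its tsum
  have hsg1 : Summable (fun n : ℤ => ‖Δ‖ * (γ * ‖x‖ * ‖x n‖ ^ 2)) :=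
    ((summable_sq x).mul_left (‖Δ‖ * (γ * ‖x‖))).congr (fun n => by ring)
  have hsg2 : Summable (fun n : ℤ => ‖Δ‖ * (μ * ‖y‖ * (‖y n‖ * ‖y (n+1)‖))) :=
    ((summable_mul_shift y y 1).mul_left (‖Δ‖ * (μ * ‖y‖))).congr (fun n => by ring)
  have hshift : (fun n : ℤ => ‖y n‖ * ‖y (n-1)‖) = (fun n : ℤ => ‖y n‖ * ‖y (n + (-1))‖) := by
    funext n
    have : n - 1 = n + (-1) := by ring
    rw [this]
  have hsg3 : Summable (fun n : ℤ => ‖Δ‖ * (μ * ‖y‖ * (‖y n‖ * ‖y (n-1)‖))) := by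
    have := ((summable_mul_shift y y (-1)).mul_left (‖Δ‖ * (μ * ‖y‖))).congr
      (fun n : ℤ => show ‖Δ‖ * (μ * ‖y‖) * (‖y n‖ * ‖y (n + (-1))‖)
        = ‖Δ‖ * (μ * ‖y‖ * (‖y n‖ * ‖y (n + (-1))‖)) by ring)
    refine this.congr (fun n => ?_)
    have hn : n + (-1) = n - 1 := by ring
    rw [hn]
  have hsumg : Summable g := by
    rw [hg]
    exact (hsg1.add hsg2).add hsg3
  have htsumg : (∑' n : ℤ, g n) ≤ ‖Δ‖ * (γ * ‖x‖ ^ 3 + 2 * μ * ‖y‖ ^ 3) := by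
    rw [hg]
    rw [Summable.tsum_add (hsg1.add hsg2) hsg3, Summable.tsum_add hsg1 hsg2]
    have e1 : (∑' n : ℤ, ‖Δ‖ * (γ * ‖x‖ * ‖x n‖ ^ 2)) = ‖Δ‖ * (γ * ‖x‖) * ‖x‖ ^ 2 := by
      have hfe : (fun n : ℤ => ‖Δ‖ * (γ * ‖x‖ * ‖x n‖ ^ 2))
          = fun n : ℤ => (‖Δ‖ * (γ * ‖x‖)) * ‖x n‖ ^ 2 := by funext n; ring
      rw [hfe, tsum_mul_left, (hasSum_sq x).tsum_eq]
    have e2 : (∑' n : ℤ, ‖Δ‖ * (μ * ‖y‖ * (‖y n‖ * ‖y (n+1)‖)))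
        ≤ ‖Δ‖ * (μ * ‖y‖) * ‖y‖ ^ 2 := by
      have hfe : (fun n : ℤ => ‖Δ‖ * (μ * ‖y‖ * (‖y n‖ * ‖y (n+1)‖)))
          = fun n : ℤ => (‖Δ‖ * (μ * ‖y‖)) * (‖y n‖ * ‖y (n+1)‖) := by funext n; ring
      rw [hfe, tsum_mul_left]
      have hc : (0:ℝ) ≤ ‖Δ‖ * (μ * ‖y‖) := by positivity
      have := tsum_mul_shift_le y 1
      nlinarith
    have e3 : (∑' n : ℤ, ‖Δ‖ * (μ * ‖y‖ * (‖y n‖ * ‖y (n-1)‖)))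
        ≤ ‖Δ‖ * (μ * ‖y‖) * ‖y‖ ^ 2 := by
      have hfe : (fun n : ℤ => ‖Δ‖ * (μ * ‖y‖ * (‖y n‖ * ‖y (n-1)‖)))
          = fun n : ℤ => (‖Δ‖ * (μ * ‖y‖)) * (‖y n‖ * ‖y (n + (-1))‖) := by
        funext n
        have hn : n - 1 = n + (-1) := by ring
        rw [hn]; ring
      rw [hfe, tsum_mul_left]
      have hc : (0:ℝ) ≤ ‖Δ‖ * (μ * ‖y‖) := by positivity
      have := tsum_mul_shift_le y (-1)
      nlinarith
    nlinarith [norm_nonneg Δ, norm_nonneg x, norm_nonneg y]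
  -- conclusion
  rw [hFr]
  have habs : Summable (fun n => |r n|) := hsum_r.abs
  calc |∑' n : ℤ, r n| ≤ ∑' n : ℤ, |r n| := by
        have := norm_tsum_le_tsum_norm (f := r) (by simpa [Real.norm_eq_abs] using habs)
        simpa [Real.norm_eq_abs] using this
    _ ≤ ∑' n : ℤ, g n := Summable.tsum_le_tsum hrg habs hsumg
    _ ≤ ‖Δ‖ * (γ * ‖x‖ ^ 3 + 2 * μ * ‖y‖ ^ 3) := htsumg

lemma hasDerivWithinAt_normsq_l2 {s : Set ℝ} {f : ℝ → l2} {D : l2} {t : ℝ}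
    (h : HasDerivWithinAt f D s t) :
    HasDerivWithinAt (fun τ => ‖f τ‖ ^ 2) (2 * RCLike.re (inner ℂ (f t) D : ℂ)) s t := by
  have h1 : HasDerivWithinAt (fun τ => (inner ℂ (f τ) (f τ) : ℂ))
      ((inner ℂ (f t) D : ℂ) + (inner ℂ D (f t) : ℂ)) s t := HasDerivWithinAt.inner ℂ h h
  have h2 := (RCLike.reCLM (K := ℂ)).hasFDerivAt.comp_hasDerivWithinAt t h1
  have h3 : (fun τ => RCLike.reCLM (K := ℂ) ((inner ℂ (f τ) (f τ) : ℂ))) = fun τ => ‖f τ‖ ^ 2 := by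
    funext τ
    simpa using inner_self_eq_norm_sq (𝕜 := ℂ) (f τ)
  rw [Function.comp_def, h3] at h2
  refine h2.congr_deriv ?_
  symm
  have h4 : (inner ℂ D (f t) : ℂ) = (starRingEnd ℂ) (inner ℂ (f t) D : ℂ) := (inner_conj_symm _ _).symm
  rw [h4]
  simp only [RCLike.reCLM_apply, map_add, RCLike.re_to_complex, Complex.add_re, Complex.conj_re]
  ring

lemma sqrt_sq_add_sq_le (a b : ℝ) (ha : 0 ≤ a) (hb : 0 ≤ b) :
    Real.sqrt (a ^ 2 + b ^ 2) ≤ a + b := by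
  have h1 : a ^ 2 + b ^ 2 ≤ (a + b) ^ 2 := by nlinarith
  calc Real.sqrt (a ^ 2 + b ^ 2) ≤ Real.sqrt ((a + b) ^ 2) := Real.sqrt_le_sqrt h1
    _ = a + b := Real.sqrt_sq (by linarith)

end CA

/-- Closeness of solutions of the saturable DNLS and the AL lattice in the `ℓ²` metric:
under the same smallness hypotheses on the initial data as in the cubic case, the solutions
satisfy `‖φ(t) − ψ(t)‖ ≤ Cε³` on `[0, T_f]`. -/
theorem closeness_saturable_l2 (γ ρ μ C₀ Cγ₀ Cμ₀ Tf : ℝ) (hγ : 0 < γ) (hρ : 0 < ρ)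
    (hμ : 0 < μ) (hC₀ : 0 < C₀) (hCγ₀ : 0 < Cγ₀) (hCμ₀ : 0 < Cμ₀) (hTf : 0 < Tf) :
    ∃ C : ℝ, 0 < C ∧
      ∀ ε : ℝ, 0 < ε → ε < 1 →
        ∀ φ φ' ψ ψ' : ℝ → l2,
          IsSatDNLSSol γ ρ (Icc 0 Tf) φ φ' →
          IsALSol μ (Icc 0 Tf) ψ ψ' →
          ‖φ 0 - ψ 0‖ ≤ C₀ * ε ^ 3 →
          ‖φ 0‖ ≤ Cγ₀ * ε →
          Pdef μ (ψ 0) ≤ Cμ₀ * ε ^ 2 →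
          ∀ t ∈ Icc 0 Tf, ‖φ t - ψ t‖ ≤ C * ε ^ 3 := by

  set Mψ := Real.sqrt (Real.exp Cμ₀ * Cμ₀ / μ) with hMψdef
  have hMψ0 : 0 ≤ Mψ := Real.sqrt_nonneg _
  set K := γ * Cγ₀ ^ 3 + 2 * μ * Mψ ^ 3 with hKdef
  have hK0 : 0 < K := by
    have h1 : 0 < γ * Cγ₀ ^ 3 := mul_pos hγ (pow_pos hCγ₀ 3)
    have h2 : 0 ≤ 2 * μ * Mψ ^ 3 := by positivity
    rw [hKdef]; linarith
  refine ⟨C₀ + K * Tf, by nlinarith, ?_⟩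
  intro ε hε0 hε1 φ φ' ψ ψ' hφ hψ hinit hφ0 hP0 t ht
  have h0mem : (0:ℝ) ∈ Icc (0:ℝ) Tf := ⟨le_refl _, hTf.le⟩
  -- conservation of the φ-norm
  have hφb : ∀ τ ∈ Icc (0:ℝ) Tf, ‖φ τ‖ ≤ Cγ₀ * ε := fun τ hτ =>
    (CA.norm_conserved hρ.le hTf hφ τ hτ).trans_le hφ0
  -- conservation of Pdef and norm bound for ψ
  have hψb : ∀ τ ∈ Icc (0:ℝ) Tf, ‖ψ τ‖ ≤ Mψ * ε := by
    intro τ hτ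
    have hPτ : Pdef μ (ψ τ) ≤ Cμ₀ * ε ^ 2 :=
      (CA.Pdef_conserved hμ hTf hψ τ hτ).trans_le hP0
    have hsq := CA.norm_sq_le_Pdef hμ (ψ τ) hPτ
    have hε2 : ε ^ 2 ≤ 1 := by nlinarith
    have h1 : Real.exp (Cμ₀ * ε ^ 2) * (Cμ₀ * ε ^ 2) / μ ≤ (Mψ * ε) ^ 2 := by
      have hexp : Real.exp (Cμ₀ * ε ^ 2) ≤ Real.exp Cμ₀ :=
        Real.exp_le_exp.mpr (by nlinarith)
      have hMψ2 : Mψ ^ 2 = Real.exp Cμ₀ * Cμ₀ / μ := Real.sq_sqrt (by positivity)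
      rw [mul_pow, hMψ2]
      rw [div_mul_eq_mul_div, div_le_div_iff₀ hμ hμ]
      have hexp2 : 0 < Real.exp (Cμ₀ * ε ^ 2) := Real.exp_pos _
      have hm := mul_le_mul_of_nonneg_right hexp (by positivity : (0:ℝ) ≤ Cμ₀ * ε ^ 2)
      nlinarith [hμ.le]
    have h2 : ‖ψ τ‖ ^ 2 ≤ (Mψ * ε) ^ 2 := le_trans hsq h1
    have h3 := Real.sqrt_le_sqrt h2
    rwa [Real.sqrt_sq (norm_nonneg _), Real.sqrt_sq (by positivity)] at h3
  -- derivative of the squared distance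
  have hDeriv : ∀ τ ∈ Icc (0:ℝ) Tf, HasDerivWithinAt (fun σ => ‖φ σ - ψ σ‖ ^ 2)
      (2 * RCLike.re (inner ℂ (φ τ - ψ τ) (φ' τ - ψ' τ) : ℂ)) (Icc (0:ℝ) Tf) τ := fun τ hτ =>
    CA.hasDerivWithinAt_normsq_l2 ((hφ.1 τ hτ).sub (hψ.1 τ hτ))
  -- bound on the derivative
  have hBound : ∀ τ ∈ Icc (0:ℝ) Tf, |RCLike.re (inner ℂ (φ τ - ψ τ) (φ' τ - ψ' τ) : ℂ)|
      ≤ ‖φ τ - ψ τ‖ * (K * ε ^ 3) := by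
    intro τ hτ
    have hx : ∀ n : ℤ, φ' τ n = Complex.I * (φ τ (n+1) + φ τ (n-1)
        + ((γ * ‖φ τ n‖ ^ 2 / (1 + ρ * ‖φ τ n‖ ^ 2) : ℝ) : ℂ) * φ τ n) :=
      fun n => CA.sat_solve hρ.le (hφ.2.2 τ hτ n)
    have hy : ∀ n : ℤ, ψ' τ n = Complex.I * (ψ τ (n+1) + ψ τ (n-1)
        + ((μ * ‖ψ τ n‖ ^ 2 : ℝ) : ℂ) * (ψ τ (n+1) + ψ τ (n-1))) :=
      fun n => CA.al_solve (hψ.2.2 τ hτ n)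
    have hib := CA.inner_diff_bound hγ hρ.le hμ (φ τ) (ψ τ) (φ' τ) (ψ' τ) hx hy
    refine hib.trans ?_
    have h1 := hφb τ hτ
    have h2 := hψb τ hτ
    have c1 : ‖φ τ‖ ^ 3 ≤ (Cγ₀ * ε) ^ 3 := pow_le_pow_left₀ (norm_nonneg _) h1 3
    have c2 : ‖ψ τ‖ ^ 3 ≤ (Mψ * ε) ^ 3 := pow_le_pow_left₀ (norm_nonneg _) h2 3
    have h3 : γ * ‖φ τ‖ ^ 3 + 2 * μ * ‖ψ τ‖ ^ 3 ≤ K * ε ^ 3 := by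
      have e1 : γ * ‖φ τ‖ ^ 3 ≤ γ * (Cγ₀ * ε) ^ 3 := mul_le_mul_of_nonneg_left c1 hγ.le
      have e2 : 2 * μ * ‖ψ τ‖ ^ 3 ≤ 2 * μ * (Mψ * ε) ^ 3 :=
        mul_le_mul_of_nonneg_left c2 (by positivity)
      have e3 : γ * (Cγ₀ * ε) ^ 3 + 2 * μ * (Mψ * ε) ^ 3 = K * ε ^ 3 := by
        rw [hKdef]; ring
      linarith
    exact mul_le_mul_of_nonneg_left h3 (norm_nonneg _)
  -- the sqrt trick
  have hS : ∀ δ : ℝ, 0 < δ → ‖φ t - ψ t‖ ≤ C₀ * ε ^ 3 + K * ε ^ 3 * Tf + δ := by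
    intro δ hδ
    set w : ℝ → ℝ := fun σ => ‖φ σ - ψ σ‖ ^ 2 with hw
    have hgd : ∀ τ ∈ Icc (0:ℝ) Tf, HasDerivWithinAt (fun σ => Real.sqrt (w σ + δ ^ 2))
        ((2 * RCLike.re (inner ℂ (φ τ - ψ τ) (φ' τ - ψ' τ) : ℂ))
          / (2 * Real.sqrt (w τ + δ ^ 2))) (Icc (0:ℝ) Tf) τ := by
      intro τ hτ
      have hne : w τ + δ ^ 2 ≠ 0 := by rw [hw]; positivity
      exact ((hDeriv τ hτ).add_const (δ ^ 2)).sqrt hne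
    have hgb : ∀ τ ∈ Icc (0:ℝ) Tf,
        ‖(2 * RCLike.re (inner ℂ (φ τ - ψ τ) (φ' τ - ψ' τ) : ℂ))
          / (2 * Real.sqrt (w τ + δ ^ 2))‖ ≤ K * ε ^ 3 := by
      intro τ hτ
      have hs0 : 0 < Real.sqrt (w τ + δ ^ 2) := Real.sqrt_pos.mpr (by rw [hw]; positivity)
      have hΔle : ‖φ τ - ψ τ‖ ≤ Real.sqrt (w τ + δ ^ 2) := by
        have h1 : (‖φ τ - ψ τ‖ : ℝ) ^ 2 ≤ w τ + δ ^ 2 := by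
          show (‖φ τ - ψ τ‖ : ℝ) ^ 2 ≤ ‖φ τ - ψ τ‖ ^ 2 + δ ^ 2
          nlinarith
        have h2 := Real.sqrt_le_sqrt h1
        rwa [Real.sqrt_sq (norm_nonneg _)] at h2
      have hnum := hBound τ hτ
      rw [Real.norm_eq_abs, abs_div, _root_.abs_of_pos (by positivity : (0:ℝ) <
        2 * Real.sqrt (w τ + δ ^ 2))]
      rw [div_le_iff₀ (by positivity)]
      have h4 : |2 * RCLike.re (inner ℂ (φ τ - ψ τ) (φ' τ - ψ' τ) : ℂ)|
          ≤ 2 * (‖φ τ - ψ τ‖ * (K * ε ^ 3)) := by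
        rw [abs_mul]
        have : |(2:ℝ)| = 2 := by norm_num
        rw [this]
        linarith
      have h5 : 0 ≤ K * ε ^ 3 := by positivity
      nlinarith
    have hmvt := Convex.norm_image_sub_le_of_norm_hasDerivWithin_le hgd hgb
      (convex_Icc 0 Tf) h0mem ht
    rw [Real.norm_eq_abs, Real.norm_eq_abs] at hmvt
    have ht0 : |t - 0| ≤ Tf := by
      rw [sub_zero, _root_.abs_of_nonneg ht.1]; exact ht.2
    have h6 : Real.sqrt (w t + δ ^ 2) - Real.sqrt (w 0 + δ ^ 2) ≤ K * ε ^ 3 * Tf := by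
      have h6a : Real.sqrt (w t + δ ^ 2) - Real.sqrt (w 0 + δ ^ 2)
          ≤ |Real.sqrt (w t + δ ^ 2) - Real.sqrt (w 0 + δ ^ 2)| := le_abs_self _
      have h6b : K * ε ^ 3 * |t - 0| ≤ K * ε ^ 3 * Tf :=
        mul_le_mul_of_nonneg_left ht0 (by positivity)
      linarith
    have h7 : Real.sqrt (w 0 + δ ^ 2) ≤ C₀ * ε ^ 3 + δ := by
      have h7a : Real.sqrt (w 0 + δ ^ 2) ≤ ‖φ 0 - ψ 0‖ + δ := by
        exact CA.sqrt_sq_add_sq_le ‖φ 0 - ψ 0‖ δ (norm_nonneg _) hδ.le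
      linarith
    have h8 : ‖φ t - ψ t‖ ≤ Real.sqrt (w t + δ ^ 2) := by
      have h8a : (‖φ t - ψ t‖ : ℝ) ^ 2 ≤ w t + δ ^ 2 := by
        show (‖φ t - ψ t‖ : ℝ) ^ 2 ≤ ‖φ t - ψ t‖ ^ 2 + δ ^ 2
        nlinarith
      have h8b := Real.sqrt_le_sqrt h8a
      rwa [Real.sqrt_sq (norm_nonneg _)] at h8b
    linarith
  -- conclude by letting δ → 0
  have hfinal : ‖φ t - ψ t‖ ≤ C₀ * ε ^ 3 + K * ε ^ 3 * Tf := by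
    set A := ‖φ t - ψ t‖ with hA
    set B := C₀ * ε ^ 3 + K * ε ^ 3 * Tf with hB
    by_contra hc
    push_neg at hc
    have := hS ((A - B) / 2) (by linarith)
    linarith
  calc ‖φ t - ψ t‖ ≤ C₀ * ε ^ 3 + K * ε ^ 3 * Tf := hfinal
    _ = (C₀ + K * Tf) * ε ^ 3 := by ring
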